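/- arXiv:1904.06772 — 7 statements merged into one kernel-verified Lean document; each statement's English description precedes it below -/
import Mathlib

section
/- Let H_X, H_C, H_P be finite-dimensional complex inner product spaces, let N₁ : H_X →ₗ[ℂ] H_C and N₂ : H_C →ₗ[ℂ] H_P be linear maps, let X be a type, v : X → H_X, and define the state family Ψ : X → H_P by Ψ x = N₂ (N₁ (v x)). Then there exist linear maps E : H_P →ₗ[ℂ] H_C (the encoder) and D : H_C →ₗ[ℂ] H_P (the decoder) such that D (E (Ψ x)) = Ψ x for every x ∈ X, and moreover E acts isometrically on the span of the family, i.e. ⟪E u, E w⟫ = ⟪u, w⟫ for all u, w in the ℂ-linear span of {Ψ x | x ∈ X}. In particular the family can be exactly compressed into a memory space of dimension dim H_C. -/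
open Submodule

/-- If `finrank F ≤ finrank G`, there is a linear isometry `F →ₗᵢ[ℂ] G`. -/
lemma exists_linearIsometry_of_finrank_le
    {F G : Type*} [NormedAddCommGroup F] [InnerProductSpace ℂ F] [FiniteDimensional ℂ F]
    [NormedAddCommGroup G] [InnerProductSpace ℂ G] [FiniteDimensional ℂ G]
    (h : Module.finrank ℂ F ≤ Module.finrank ℂ G) :
    Nonempty (F →ₗᵢ[ℂ] G) := by
  set n := Module.finrank ℂ F
  set m := Module.finrank ℂ G
  let bF := stdOrthonormalBasis ℂ F
  let bG := stdOrthonormalBasis ℂ G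
  let w : Fin n → G := fun i => bG (Fin.castLE h i)
  have hw : Orthonormal ℂ w := bG.orthonormal.comp _ (Fin.castLE_injective h)
  let T : Submodule ℂ G := span ℂ (Set.range w)
  let bT : Module.Basis (Fin n) ℂ T := Module.Basis.span hw.linearIndependent
  have hbT : Orthonormal ℂ bT := by
    rw [orthonormal_iff_ite]
    intro i j
    have := orthonormal_iff_ite.mp hw i j
    rw [← this]
    have hi : (bT i : G) = w i := congrArg Subtype.val (Module.Basis.span_apply hw.linearIndependent i)
    have hj : (bT j : G) = w j := congrArg Subtype.val (Module.Basis.span_apply hw.linearIndependent j)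
    rw [show (inner ℂ (bT i) (bT j) : ℂ) = inner ℂ ((bT i : G)) ((bT j : G)) from rfl, hi, hj]
  have hbF : Orthonormal ℂ bF.toBasis := by rw [bF.coe_toBasis]; exact bF.orthonormal
  exact ⟨T.subtypeₗᵢ.comp (hbF.equiv hbT (Equiv.refl _)).toLinearIsometry⟩

/-- A cut-induced factorization `Ψ x = N₂ (N₁ (v x))` of a tensor-network
state family yields an exact compression protocol `(E, D)` into the cut space `H_C`,
with the encoder acting isometrically on the span of the family. -/
theorem exact_compression_of_factorization
    {H_X H_C H_P : Type*}
    [NormedAddCommGroup H_X] [InnerProductSpace ℂ H_X] [FiniteDimensional ℂ H_X]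
    [NormedAddCommGroup H_C] [InnerProductSpace ℂ H_C] [FiniteDimensional ℂ H_C]
    [NormedAddCommGroup H_P] [InnerProductSpace ℂ H_P] [FiniteDimensional ℂ H_P]
    (N₁ : H_X →ₗ[ℂ] H_C) (N₂ : H_C →ₗ[ℂ] H_P)
    {X : Type*} (v : X → H_X) (Ψ : X → H_P)
    (hΨ : ∀ x, Ψ x = N₂ (N₁ (v x))) :
    ∃ (E : H_P →ₗ[ℂ] H_C) (D : H_C →ₗ[ℂ] H_P),
      (∀ x, D (E (Ψ x)) = Ψ x) ∧
      (∀ u w : H_P, u ∈ Submodule.span ℂ (Set.range Ψ) →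
        w ∈ Submodule.span ℂ (Set.range Ψ) →
        (inner ℂ (E u) (E w) : ℂ) = (inner ℂ u w : ℂ)) := by
  classical
  set S : Submodule ℂ H_P := Submodule.span ℂ (Set.range Ψ) with hS
  -- dimension bound
  have hle : S ≤ LinearMap.range (N₂.comp N₁) := by
    rw [hS, Submodule.span_le]
    rintro _ ⟨x, rfl⟩
    exact ⟨v x, (hΨ x).symm⟩
  have hdim : Module.finrank ℂ S ≤ Module.finrank ℂ H_C := by
    calc Module.finrank ℂ S ≤ Module.finrank ℂ (LinearMap.range (N₂.comp N₁)) :=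
          Submodule.finrank_mono hle
      _ = Module.finrank ℂ (Submodule.map N₂ (LinearMap.range N₁)) := by
          rw [LinearMap.range_comp]
      _ ≤ Module.finrank ℂ (LinearMap.range N₁) := Submodule.finrank_map_le _ _
      _ ≤ Module.finrank ℂ H_C := Submodule.finrank_le _
  obtain ⟨J⟩ := exists_linearIsometry_of_finrank_le hdim
  set T : Submodule ℂ H_C := LinearMap.range J.toLinearMap with hT
  let e : S ≃ₗ[ℂ] T := LinearEquiv.ofInjective J.toLinearMap J.injective
  refine ⟨J.toLinearMap ∘ₗ (orthogonalProjection S : H_P →L[ℂ] S).toLinearMap,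
    S.subtype ∘ₗ e.symm.toLinearMap ∘ₗ (orthogonalProjection T : H_C →L[ℂ] T).toLinearMap,
    ?_, ?_⟩
  · intro x
    have hx : Ψ x ∈ S := Submodule.subset_span ⟨x, rfl⟩
    have h1 : orthogonalProjection S (Ψ x) = ⟨Ψ x, hx⟩ :=
      Subtype.ext (starProjection_eq_self_iff.mpr hx)
    have hmem : J ⟨Ψ x, hx⟩ ∈ T := ⟨⟨Ψ x, hx⟩, rfl⟩
    have h2 : orthogonalProjection T (J ⟨Ψ x, hx⟩) = ⟨J ⟨Ψ x, hx⟩, hmem⟩ :=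
      Subtype.ext (starProjection_eq_self_iff.mpr hmem)
    have h3 : e.symm ⟨J ⟨Ψ x, hx⟩, hmem⟩ = ⟨Ψ x, hx⟩ := by
      apply e.injective
      rw [e.apply_symm_apply]
      exact Subtype.ext (LinearEquiv.ofInjective_apply J.toLinearMap ⟨Ψ x, hx⟩).symm
    simp only [LinearMap.comp_apply, ContinuousLinearMap.coe_coe, h1]
    rw [show (J.toLinearMap ⟨Ψ x, hx⟩ : H_C) = J ⟨Ψ x, hx⟩ from rfl, h2]
    rw [show (e.symm.toLinearMap ⟨J ⟨Ψ x, hx⟩, hmem⟩ : S) = e.symm ⟨J ⟨Ψ x, hx⟩, hmem⟩ from rfl, h3]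
    rfl
  · intro u w hu hw
    have h1 : orthogonalProjection S u = ⟨u, hu⟩ := Subtype.ext (starProjection_eq_self_iff.mpr hu)
    have h2 : orthogonalProjection S w = ⟨w, hw⟩ := Subtype.ext (starProjection_eq_self_iff.mpr hw)
    simp only [LinearMap.comp_apply, ContinuousLinearMap.coe_coe, h1, h2]
    rw [show J.toLinearMap = (J : S → H_C) from rfl]
    rw [J.inner_map_map]
    rfl
end

section
/- Let ι be a finite index set (a Finset) and let d : ι → ℕ satisfy 2 ≤ d e for every e ∈ ι. Then ∑_{e ∈ ι} logb 2 (d e) ≤ (logb 2 3) · ∑_{e ∈ ι} ⌊logb 2 (d e)⌋, where logb 2 denotes the base-2 real logarithm and ⌊·⌋ the integer floor (cast to ℝ). -/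
lemma logb_three_ge : (3:ℝ)/2 ≤ Real.logb 2 3 := by
  rw [Real.le_logb_iff_rpow_le (by norm_num) (by norm_num)]
  have h : ((2:ℝ) ^ ((3:ℝ)/2)) ^ 2 = 8 := by
    rw [← Real.rpow_natCast ((2:ℝ) ^ ((3:ℝ)/2)) 2, ← Real.rpow_mul (by norm_num)]
    norm_num
  nlinarith [Real.rpow_nonneg (by norm_num : (0:ℝ) ≤ 2) ((3:ℝ)/2)]

lemma logb_four : Real.logb 2 4 = 2 := by
  rw [show (4:ℝ) = 2 ^ (2:ℕ) by norm_num, Real.logb_pow]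
  simp

lemma key (n : ℕ) (hn : 2 ≤ n) :
    Real.logb 2 n ≤ Real.logb 2 3 * (⌊Real.logb 2 n⌋ : ℝ) := by
  have hb : (1:ℝ) < 2 := by norm_num
  have hn0 : (0:ℝ) < (n:ℝ) := by exact_mod_cast Nat.lt_of_lt_of_le (by norm_num) hn
  have h1 : (1:ℝ) ≤ Real.logb 2 n := by
    rw [show (1:ℝ) = Real.logb 2 2 by simp]
    exact Real.logb_le_logb_of_le hb (by norm_num) (by exact_mod_cast hn)
  by_cases h3 : n ≤ 3
  · have hle : Real.logb 2 n ≤ Real.logb 2 3 :=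
      Real.logb_le_logb_of_le hb hn0 (by exact_mod_cast h3)
    have h34 : Real.logb 2 3 < 2 := by
      have := Real.logb_lt_logb hb (by norm_num : (0:ℝ) < 3) (by norm_num : (3:ℝ) < 4)
      rwa [logb_four] at this
    have hfl : ⌊Real.logb 2 n⌋ = 1 := by
      rw [Int.floor_eq_iff]
      constructor
      · exact_mod_cast h1
      · push_cast; linarith
    rw [hfl]
    simpa using hle
  · have h4 : (4:ℕ) ≤ n := by omega
    have h2 : (2:ℝ) ≤ Real.logb 2 n := by
      have := Real.logb_le_logb_of_le hb (by norm_num : (0:ℝ) < 4)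
        (show (4:ℝ) ≤ (n:ℝ) by exact_mod_cast h4)
      rwa [logb_four] at this
    have hk : (2:ℝ) ≤ (⌊Real.logb 2 n⌋ : ℝ) := by
      exact_mod_cast Int.le_floor.mpr (by exact_mod_cast h2)
    have hlt : Real.logb 2 n < (⌊Real.logb 2 n⌋ : ℝ) + 1 :=
      Int.lt_floor_add_one _
    nlinarith [logb_three_ge]

/-- Rounding each edge dimension down to a power of two changes the
capacity of a cut by at most a multiplicative factor `log₂ 3`. -/
theorem sum_logb_le_logb_three_mul_sum_floor
    {α : Type*} (ι : Finset α) (d : α → ℕ) (hd : ∀ e ∈ ι, 2 ≤ d e) :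
    ∑ e ∈ ι, Real.logb 2 (d e) ≤
      Real.logb 2 3 * ∑ e ∈ ι, (⌊Real.logb 2 (d e)⌋ : ℝ) := by
  rw [Finset.mul_sum]
  exact Finset.sum_le_sum fun e he => key (d e) (hd e he)
end

section
/- Fix natural numbers n, n', d_p, d_c and matrices A : Fin n → Fin d_p → Matrix (Fin d_c) (Fin d_c) ℂ and B : Fin n' → Fin d_p → Matrix (Fin d_c) (Fin d_c) ℂ. For L, R : Fin d_c → ℂ define the bipartite matrix product state Ψ_{L,R} : ((Fin n → Fin d_p) × (Fin n' → Fin d_p)) → ℂ by Ψ_{L,R}(i, j) = L ⬝ᵥ ((A 0 (i 0)) * ⋯ * (A (n-1) (i (n-1))) * (B 0 (j 0)) * ⋯ * (B (n'-1) (j (n'-1)))) *ᵥ R. Then there exists a linear map P : ((Fin n → Fin d_p) → ℂ) →ₗ[ℂ] ((Fin n → Fin d_p) → ℂ) with P ∘ P = P and finrank ℂ (range P) ≤ d_c², such that for all L, R and all (i, j): P (fun i' => Ψ_{L,R}(i', j)) i = Ψ_{L,R}(i, j); that is, applying P ⊗ id to Ψ_{L,R} leaves it invariant. -/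
open Matrix

/-- Local compression of a bipartite MPS with unknown boundary
conditions: there is an idempotent map `P` of rank at most `d_c²` acting only on the
first `n` sites that leaves every state `Ψ_{L,R}` invariant. -/
theorem mps_local_compression
    (n n' d_p d_c : ℕ)
    (A : Fin n → Fin d_p → Matrix (Fin d_c) (Fin d_c) ℂ)
    (B : Fin n' → Fin d_p → Matrix (Fin d_c) (Fin d_c) ℂ)
    (Ψ : (Fin d_c → ℂ) → (Fin d_c → ℂ) → ((Fin n → Fin d_p) × (Fin n' → Fin d_p)) → ℂ)
    (hΨ : ∀ L R i j, Ψ L R (i, j) =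
      L ⬝ᵥ (((List.ofFn fun k => A k (i k)).prod *
              (List.ofFn fun k => B k (j k)).prod).mulVec R)) :
    ∃ P : ((Fin n → Fin d_p) → ℂ) →ₗ[ℂ] ((Fin n → Fin d_p) → ℂ),
      P ∘ₗ P = P ∧
      Module.finrank ℂ (LinearMap.range P) ≤ d_c ^ 2 ∧
      ∀ (L R : Fin d_c → ℂ) (i : Fin n → Fin d_p) (j : Fin n' → Fin d_p),
        P (fun i' => Ψ L R (i', j)) i = Ψ L R (i, j) := by
  classical
  -- spanning family: matrix entries of the product of A's
  set g : Fin d_c × Fin d_c → ((Fin n → Fin d_p) → ℂ) :=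
    fun ab i' => (List.ofFn fun k => A k (i' k)).prod ab.1 ab.2 with hg
  set V : Submodule ℂ ((Fin n → Fin d_p) → ℂ) := Submodule.span ℂ (Set.range g) with hV
  obtain ⟨W, hW⟩ := V.exists_isCompl
  refine ⟨V.subtype ∘ₗ V.projectionOnto W hW, ?_, ?_, ?_⟩
  · ext x
    simp [Submodule.projectionOnto_apply_left, Submodule.projection_apply_of_mem_left _ (Submodule.projection_apply_mem hW _)]
  · have hrange : LinearMap.range (V.subtype ∘ₗ V.projectionOnto W hW) ≤ V := by
      rintro x ⟨y, rfl⟩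
      exact (V.projectionOnto W hW y).2
    calc Module.finrank ℂ (LinearMap.range (V.subtype ∘ₗ V.projectionOnto W hW))
        ≤ Module.finrank ℂ V := Submodule.finrank_mono hrange
      _ ≤ (Set.range g).toFinset.card := finrank_span_le_card _
      _ ≤ Fintype.card (Fin d_c × Fin d_c) := by
          rw [Set.toFinset_card]; exact Fintype.card_range_le g
      _ ≤ d_c ^ 2 := by simp [sq]
  · intro L R i j
    have hmem : (fun i' => Ψ L R (i', j)) ∈ V := by
      have : (fun i' => Ψ L R (i', j)) =
          ∑ ab : Fin d_c × Fin d_c,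
            (L ab.1 * ((List.ofFn fun k => B k (j k)).prod.mulVec R) ab.2) • g ab := by
        funext i'
        rw [hΨ]
        simp only [Finset.sum_apply, Pi.smul_apply, smul_eq_mul, hg]
        rw [← Matrix.mulVec_mulVec]
        simp only [dotProduct, Matrix.mulVec, Fintype.sum_prod_type, Finset.mul_sum,
          Finset.sum_mul]
        refine Finset.sum_congr rfl fun a _ => Finset.sum_congr rfl fun b _ => ?_
        refine Finset.sum_congr rfl fun c _ => ?_
        ring
      rw [this]
      exact Submodule.sum_mem _ fun ab _ =>
        Submodule.smul_mem _ _ (Submodule.subset_span ⟨ab, rfl⟩)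
    have : (V.subtype ∘ₗ V.projectionOnto W hW) (fun i' => Ψ L R (i', j)) =
        (fun i' => Ψ L R (i', j)) := by
      have := Submodule.projectionOnto_apply_left hW ⟨_, hmem⟩
      simpa using congrArg V.subtype this
    exact congrFun this i
end

section
/- Fix natural numbers n, d_p, d_c. For a site tensor A : Fin d_p → Matrix (Fin d_c) (Fin d_c) ℂ and boundary vectors L, R : Fin d_c → ℂ, define the site-independent matrix product state Ψ_{A,L,R} : (Fin n → Fin d_p) → ℂ by Ψ_{A,L,R}(i) = L ⬝ᵥ ((A (i 0)) * (A (i 1)) * ⋯ * (A (i (n-1)))) *ᵥ R. Then the ℂ-linear span of the set {Ψ_{A,L,R} | A, L, R} (over all site tensors A and all boundary vectors L, R) has dimension at most d_c² · Nat.choose (n + d_c²·d_p − 1) (d_c²·d_p − 1). -/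
open Matrix

open Finset in
/-- Boundary-contracted entry of a matrix product as a sum over paths. -/
lemma path_sum {d : ℕ} : ∀ (m : ℕ) (M : Fin m → Matrix (Fin d) (Fin d) ℂ) (L R : Fin d → ℂ),
    L ⬝ᵥ (List.ofFn M).prod.mulVec R
      = ∑ j : Fin (m + 1) → Fin d,
          L (j 0) * (∏ k : Fin m, M k (j k.castSucc) (j k.succ)) * R (j (Fin.last m))
  | 0, M, L, R => by
    rw [List.ofFn_zero, List.prod_nil, Matrix.one_mulVec, dotProduct]
    exact Fintype.sum_equiv (Equiv.funUnique (Fin 1) (Fin d)).symm _ _ (fun a => by simp)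
  | m + 1, M, L, R => by
    rw [List.ofFn_succ, List.prod_cons, ← Matrix.mulVec_mulVec, Matrix.dotProduct_mulVec,
      path_sum m (fun k => M k.succ) (L ᵥ* M 0) R,
      ← Fintype.sum_equiv (Fin.consEquiv (fun _ : Fin (m + 2) => Fin d)) _ _ (fun _ => rfl),
      Fintype.sum_prod_type]
    rw [Finset.sum_comm]
    refine Finset.sum_congr rfl fun j' _ => ?_
    simp only [Fin.consEquiv_apply, Fin.cons_zero, Fin.cons_succ, Fin.prod_univ_succ,
      Fin.castSucc_zero, Fin.succ_last]
    have h : ∀ (a : Fin d) (k : Fin m),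
        (Fin.cons a j' : Fin (m + 2) → Fin d) k.succ.castSucc = j' k.castSucc := fun a k => by
      rw [← Fin.succ_castSucc, Fin.cons_succ]
    simp only [h, ← Fin.succ_last, Fin.cons_succ, Matrix.vecMul, dotProduct,
      Finset.sum_mul]
    exact Finset.sum_congr rfl fun a _ => by ring

open Finset in
/-- The contraction map: from coefficient vectors indexed by (multiset of site data, boundary
pair) to functions on configurations. -/
noncomputable def simpsPhi (n d_p d_c : ℕ) :
    ((Sym (Fin d_p × Fin d_c × Fin d_c) n × Fin d_c × Fin d_c) → ℂ)
      →ₗ[ℂ] ((Fin n → Fin d_p) → ℂ) where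
  toFun c := fun i => ∑ j : Fin (n + 1) → Fin d_c,
    c (⟨(univ : Finset (Fin n)).val.map (fun k => (i k, j k.castSucc, j k.succ)), by simp⟩,
      (j 0, j (Fin.last n)))
  map_add' c c' := by funext i; simp [Finset.sum_add_distrib]
  map_smul' r c := by funext i; simp [Finset.mul_sum]

lemma multichoose_le (D n : ℕ) : Nat.multichoose D n ≤ (n + D - 1).choose (D - 1) := by
  cases D with
  | zero =>
    rw [Nat.multichoose_eq]
    cases n with
    | zero => simp
    | succ m =>
      simp only [Nat.zero_add, Nat.add_sub_cancel]
      calc m.choose (m + 1) = 0 := Nat.choose_eq_zero_of_lt (by omega)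
        _ ≤ _ := Nat.zero_le _
  | succ e =>
    rw [Nat.multichoose_eq]
    have h1 : e + 1 + n - 1 = n + e := by omega
    have h2 : n + (e + 1) - 1 = n + e := by omega
    have h3 : e + 1 - 1 = e := by omega
    rw [h1, h2, h3, ← Nat.choose_symm (Nat.le_add_left e n)]
    simp

/-- The family of site-independent matrix product states (over all site
tensors `A` and boundary vectors `L, R`) spans a subspace of dimension at most
`d_c² · C(n + d_c²·d_p − 1, d_c²·d_p − 1)`. -/
theorem simps_span_finrank_le
    (n d_p d_c : ℕ) :
    Module.finrank ℂ (Submodule.span ℂ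
      { Ψ : (Fin n → Fin d_p) → ℂ |
        ∃ (A : Fin d_p → Matrix (Fin d_c) (Fin d_c) ℂ) (L R : Fin d_c → ℂ),
          Ψ = fun i => L ⬝ᵥ (List.ofFn fun k => A (i k)).prod.mulVec R }) ≤
      d_c ^ 2 * Nat.choose (n + d_c ^ 2 * d_p - 1) (d_c ^ 2 * d_p - 1) := by
  have hle : Submodule.span ℂ
      { Ψ : (Fin n → Fin d_p) → ℂ |
        ∃ (A : Fin d_p → Matrix (Fin d_c) (Fin d_c) ℂ) (L R : Fin d_c → ℂ),
          Ψ = fun i => L ⬝ᵥ (List.ofFn fun k => A (i k)).prod.mulVec R }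
      ≤ LinearMap.range (simpsPhi n d_p d_c) := by
    rw [Submodule.span_le]
    rintro Ψ ⟨A, L, R, rfl⟩
    refine ⟨fun sab => L sab.2.1 * (sab.1.1.map fun t => A t.1 t.2.1 t.2.2).prod * R sab.2.2, ?_⟩
    funext i
    rw [show (simpsPhi n d_p d_c) _ i = _ from rfl, path_sum n (fun k => A (i k)) L R]
    refine Finset.sum_congr rfl fun j _ => ?_
    simp only [Multiset.map_map, Function.comp]
    rw [Finset.prod_eq_multiset_prod]
  calc Module.finrank ℂ (Submodule.span ℂ _)
      ≤ Module.finrank ℂ (LinearMap.range (simpsPhi n d_p d_c)) :=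
        Submodule.finrank_mono hle
    _ ≤ Module.finrank ℂ
        ((Sym (Fin d_p × Fin d_c × Fin d_c) n × Fin d_c × Fin d_c) → ℂ) :=
        (simpsPhi n d_p d_c).finrank_range_le
    _ = Fintype.card (Sym (Fin d_p × Fin d_c × Fin d_c) n × Fin d_c × Fin d_c) :=
        Module.finrank_pi ℂ
    _ ≤ d_c ^ 2 * Nat.choose (n + d_c ^ 2 * d_p - 1) (d_c ^ 2 * d_p - 1) := by
        simp only [Fintype.card_prod, Sym.card_sym_eq_multichoose, Fintype.card_fin]
        have h : d_p * (d_c * d_c) = d_c ^ 2 * d_p := by ring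
        rw [h, mul_comm]
        have : d_c * d_c = d_c ^ 2 := by ring
        rw [this]
        exact Nat.mul_le_mul_left _ (multichoose_le _ _)
end

section
/- Fix natural numbers m, d_p, d_c, D, site tensors A : Fin (2·m) → Fin d_p → Matrix (Fin d_c) (Fin d_c) ℂ, and for each k : Fin m a matrix V k : Matrix (Fin D) (Fin d_p × Fin d_p) ℂ. Define new site tensors B : Fin m → Fin D → Matrix (Fin d_c) (Fin d_c) ℂ by B k j = ∑_{(i₁,i₂) : Fin d_p × Fin d_p} (V k) j (i₁,i₂) • ((A (2k) i₁) * (A (2k+1) i₂)). Then for all boundary vectors L, R : Fin d_c → ℂ and all j : Fin m → Fin D: ∑_{i : Fin (2m) → Fin d_p} (∏_{k : Fin m} (V k) (j k) (i (2k), i (2k+1))) · ( L ⬝ᵥ ((A 0 (i 0)) * (A 1 (i 1)) * ⋯ * (A (2m-1) (i (2m-1)))) *ᵥ R ) = L ⬝ᵥ ((B 0 (j 0)) * (B 1 (j 1)) * ⋯ * (B (m-1) (j (m-1)))) *ᵥ R. That is, applying the maps V k pairwise to adjacent sites of a matrix product state yields again a matrix product state on m sites with the same bond dimension d_c and site tensors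 B. -/
open Matrix

lemma mps_aux (d_p d_c D : ℕ) :
    ∀ (m : ℕ) (A : ℕ → Fin d_p → Matrix (Fin d_c) (Fin d_c) ℂ)
      (V : ℕ → Matrix (Fin D) (Fin d_p × Fin d_p) ℂ) (j : ℕ → Fin D),
    ∑ i : Fin (2*m) → Fin d_p,
      (∏ k : Fin m, V k (j k) (i ⟨2*k.1, by omega⟩, i ⟨2*k.1+1, by omega⟩)) •
        (List.ofFn fun t : Fin (2*m) => A t (i t)).prod
    = (List.ofFn fun k : Fin m =>
        ∑ p : Fin d_p × Fin d_p, V k (j k) p • (A (2*k.1) p.1 * A (2*k.1+1) p.2)).prod := by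
  intro m
  induction m with
  | zero => intro A V j; simp
  | succ n ih =>
    intro A V j
    have hsum : ∀ (F : (Fin (2*n+2) → Fin d_p) → Matrix (Fin d_c) (Fin d_c) ℂ),
        ∑ i : Fin (2*n+2) → Fin d_p, F i
          = ∑ x0 : Fin d_p, ∑ x1 : Fin d_p, ∑ i : Fin (2*n) → Fin d_p,
              F (Fin.cons x0 (Fin.cons x1 i)) := by
      intro F
      rw [← (Fin.consEquiv (fun _ : Fin (2*n+2) => Fin d_p)).sum_comp, Fintype.sum_prod_type]
      refine Finset.sum_congr rfl fun x0 _ => ?_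
      rw [← (Fin.consEquiv (fun _ : Fin (2*n+1) => Fin d_p)).sum_comp, Fintype.sum_prod_type]
      rfl
    show ∑ i : Fin (2*n+2) → Fin d_p, _ = _
    rw [hsum]
    simp only [Fin.prod_univ_succ, List.ofFn_succ, List.prod_cons]
    show ∑ x0 : Fin d_p, ∑ x1 : Fin d_p, ∑ i : Fin (2*n) → Fin d_p,
        (V 0 (j 0) (x0, x1) *
          ∏ k : Fin n, V (k.1+1) (j (k.1+1)) (i ⟨2*k.1, by omega⟩, i ⟨2*k.1+1, by omega⟩)) •
          (A 0 x0 * (A 1 x1 * (List.ofFn fun t : Fin (2*n) => A (t.1+2) (i t)).prod))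
      = (∑ p : Fin d_p × Fin d_p, V 0 (j 0) p • (A 0 p.1 * A 1 p.2)) *
        (List.ofFn fun k : Fin n =>
          ∑ p : Fin d_p × Fin d_p,
            V (k.1+1) (j (k.1+1)) p • (A (2*k.1+2) p.1 * A (2*k.1+1+2) p.2)).prod
    have key : ∀ (x0 x1 : Fin d_p) (i : Fin (2*n) → Fin d_p),
        (V 0 (j 0) (x0, x1) *
          ∏ k : Fin n, V (k.1+1) (j (k.1+1)) (i ⟨2*k.1, by omega⟩, i ⟨2*k.1+1, by omega⟩)) •
          (A 0 x0 * (A 1 x1 * (List.ofFn fun t : Fin (2*n) => A (t.1+2) (i t)).prod))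
        = (V 0 (j 0) (x0, x1) • (A 0 x0 * A 1 x1)) *
          ((∏ k : Fin n, V (k.1+1) (j (k.1+1)) (i ⟨2*k.1, by omega⟩, i ⟨2*k.1+1, by omega⟩)) •
            (List.ofFn fun t : Fin (2*n) => A (t.1+2) (i t)).prod) := by
      intro x0 x1 i
      rw [smul_mul_smul_comm, mul_assoc]
    simp only [key, ← Finset.sum_mul, ← Finset.mul_sum]
    congr 1
    · exact (Fintype.sum_prod_type (fun p : Fin d_p × Fin d_p => V 0 (j 0) p • (A 0 p.1 * A 1 p.2))).symm
    · exact ih (fun t => A (t+2)) (fun k => V (k+1)) (fun k => j (k+1))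

/-- Pairwise blocking of an MPS: applying a map `V k` to each adjacent
pair of sites of a matrix product state yields again a matrix product state on `m` sites
with the same bond dimension `d_c` and site tensors `B`. -/
theorem mps_pairwise_blocking
    (m d_p d_c D : ℕ)
    (A : Fin (2 * m) → Fin d_p → Matrix (Fin d_c) (Fin d_c) ℂ)
    (V : Fin m → Matrix (Fin D) (Fin d_p × Fin d_p) ℂ)
    (B : Fin m → Fin D → Matrix (Fin d_c) (Fin d_c) ℂ)
    (hB : ∀ (k : Fin m) (j : Fin D),
      B k j = ∑ p : Fin d_p × Fin d_p,
        V k j p •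
          (A ⟨2 * k.1, by have := k.2; omega⟩ p.1 *
           A ⟨2 * k.1 + 1, by have := k.2; omega⟩ p.2)) :
    ∀ (L R : Fin d_c → ℂ) (j : Fin m → Fin D),
      ∑ i : Fin (2 * m) → Fin d_p,
        (∏ k : Fin m,
            V k (j k) (i ⟨2 * k.1, by have := k.2; omega⟩,
                       i ⟨2 * k.1 + 1, by have := k.2; omega⟩)) *
          (L ⬝ᵥ (List.ofFn fun t => A t (i t)).prod.mulVec R) =
      L ⬝ᵥ (List.ofFn fun k => B k (j k)).prod.mulVec R := by
  intro L R jv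
  have lin : ∀ {ι : Type} (s : Finset ι) (c : ι → ℂ)
      (M : ι → Matrix (Fin d_c) (Fin d_c) ℂ),
      L ⬝ᵥ (∑ i ∈ s, c i • M i).mulVec R = ∑ i ∈ s, c i * (L ⬝ᵥ (M i).mulVec R) := by
    intro ι s c M
    induction s using Finset.cons_induction with
    | empty => simp
    | cons a s ha ih =>
      simp [Finset.sum_cons, Matrix.add_mulVec, Matrix.smul_mulVec, ih, smul_eq_mul]
  rcases Nat.eq_zero_or_pos m with hm | hm
  · subst hm
    simp
  · set A' : ℕ → Fin d_p → Matrix (Fin d_c) (Fin d_c) ℂ :=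
      fun t => if h : t < 2 * m then A ⟨t, h⟩ else fun _ => 0 with hA'
    set V' : ℕ → Matrix (Fin D) (Fin d_p × Fin d_p) ℂ :=
      fun k => if h : k < m then V ⟨k, h⟩ else 0 with hV'
    set j' : ℕ → Fin D := fun k => if h : k < m then jv ⟨k, h⟩ else jv ⟨0, hm⟩ with hj'
    have h := mps_aux d_p d_c D m A' V' j'
    have c1 : ∀ k : Fin m, 2 * k.1 < 2 * m := fun k => by have := k.2; omega
    have c2 : ∀ k : Fin m, 2 * k.1 + 1 < 2 * m := fun k => by have := k.2; omega
    simp only [hA', hV', hj', Fin.is_lt, c1, c2, dif_pos, Fin.eta] at h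
    simp only [← hB] at h
    rw [← h]
    exact lin (ι := (Fin (2*m) → Fin d_p)) Finset.univ
      (fun i => ∏ k : Fin m,
        V k (jv k) (i ⟨2 * k.1, by have := k.2; omega⟩, i ⟨2 * k.1 + 1, by have := k.2; omega⟩))
      (fun i => (List.ofFn fun t => A t (i t)).prod) |>.symm
end

section
/- Let r be a natural number and let u, v : Fin r → ℂ be orthonormal column vectors in ℂ^r (uᴴu = 1, vᴴv = 1, uᴴv = 0), viewed as r×1 matrices. Define the six unit vectors ψ_{x,±} = (u ± v)/√2, ψ_{y,±} = (u ± i·v)/√2, ψ_{z,+} = u, ψ_{z,-} = v, the unitaries U_{α,s} = 1 − 2·ψ_{α,s}ψ_{α,s}ᴴ, and the projection P = u·uᴴ + v·vᴴ. Then for every matrix ρ ∈ Matrix (Fin r) (Fin r) ℂ: (1/6) · ∑_{α ∈ {x,y,z}} ∑_{s ∈ {+,−}} U_{α,s} * ρ * U_{α,s} = (2/3)·(Matrix.trace (P * ρ)) • P − (1/3) • (P * ρ * P) + (1 − P) * ρ * (1 − P). -/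
open Matrix

/-- Reflection `1 − 2 ψψᴴ` about the vector `ψ`. -/
noncomputable def reflU {r : ℕ} (ψ : Fin r → ℂ) : Matrix (Fin r) (Fin r) ℂ :=
  1 - (2 : ℂ) • Matrix.vecMulVec ψ (star ψ)

/-- The six fiducial states `(u ± v)/√2`, `(u ± i·v)/√2`, `u`, `v` built from a pair
`u, v` of vectors. -/
noncomputable def sixStates {r : ℕ} (u v : Fin r → ℂ) : Fin 6 → (Fin r → ℂ) :=
  ![((Real.sqrt 2 : ℂ))⁻¹ • (u + v),
    ((Real.sqrt 2 : ℂ))⁻¹ • (u - v),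
    ((Real.sqrt 2 : ℂ))⁻¹ • (u + Complex.I • v),
    ((Real.sqrt 2 : ℂ))⁻¹ • (u - Complex.I • v),
    u, v]

section Aux
variable {r : ℕ}


lemma vmv_mul_vmv_mid (a b c d : Fin r → ℂ) (ρ : Matrix (Fin r) (Fin r) ℂ) :
    vecMulVec a b * ρ * vecMulVec c d = (b ⬝ᵥ ρ *ᵥ c) • vecMulVec a d := by
  ext i j
  simp only [mul_apply, vecMulVec_apply, Matrix.smul_apply, dotProduct, mulVec, smul_eq_mul,
    Finset.sum_mul, Finset.mul_sum]
  rw [Finset.sum_comm]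
  apply Finset.sum_congr rfl
  intro k _
  apply Finset.sum_congr rfl
  intro l _
  ring

lemma trace_vmv_mul (a b : Fin r → ℂ) (ρ : Matrix (Fin r) (Fin r) ℂ) :
    (vecMulVec a b * ρ).trace = b ⬝ᵥ ρ *ᵥ a := by
  simp only [trace, diag, mul_apply, vecMulVec_apply, dotProduct, mulVec, smul_eq_mul]
  rw [Finset.sum_comm]
  simp only [Finset.mul_sum]
  apply Finset.sum_congr rfl
  intro k _
  apply Finset.sum_congr rfl
  intro l _
  ring

lemma vmv_add_left (a b c : Fin r → ℂ) :
    vecMulVec (a + b) c = vecMulVec a c + vecMulVec b c := by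
  ext i j; simp [vecMulVec_apply, add_mul]

lemma vmv_add_right (a b c : Fin r → ℂ) :
    vecMulVec a (b + c) = vecMulVec a b + vecMulVec a c := by
  ext i j; simp [vecMulVec_apply, mul_add]

lemma vmv_smul_left (t : ℂ) (a c : Fin r → ℂ) :
    vecMulVec (t • a) c = t • vecMulVec a c := by
  ext i j; simp [vecMulVec_apply, mul_assoc]

lemma vmv_smul_right (t : ℂ) (a c : Fin r → ℂ) :
    vecMulVec a (t • c) = t • vecMulVec a c := by
  ext i j; simp [vecMulVec_apply]; ring

lemma reflU_sqrt_smul (w : Fin r → ℂ) :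
    reflU (((Real.sqrt 2 : ℂ))⁻¹ • w) = 1 - vecMulVec w (star w) := by
  unfold reflU
  rw [star_smul, vmv_smul_left, vmv_smul_right, smul_smul, smul_smul]
  have hc : (2 : ℂ) * (((Real.sqrt 2 : ℂ))⁻¹ * star ((Real.sqrt 2 : ℂ))⁻¹) = 1 := by
    rw [star_inv₀, Complex.star_def, Complex.conj_ofReal, ← mul_inv]
    norm_num [← Complex.ofReal_mul, Real.mul_self_sqrt]
  rw [mul_assoc, hc, one_smul]

end Aux

/-- For the six fiducial states built from an orthonormal pair `u, v`
spanning a two-dimensional subspace with projector `P = uuᴴ + vvᴴ`, the average of the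
six reflections acts as
`(2/3)·Tr(Pρ)·P − (1/3)·PρP + (1−P)ρ(1−P)` on every matrix `ρ`. -/
theorem six_reflections_channel_identity
    (r : ℕ) (u v : Fin r → ℂ)
    (huu : star u ⬝ᵥ u = 1) (hvv : star v ⬝ᵥ v = 1) (huv : star u ⬝ᵥ v = 0)
    (P : Matrix (Fin r) (Fin r) ℂ)
    (hP : P = Matrix.vecMulVec u (star u) + Matrix.vecMulVec v (star v))
    (ρ : Matrix (Fin r) (Fin r) ℂ) :
    (1 / 6 : ℂ) • ∑ a : Fin 6, reflU (sixStates u v a) * ρ * reflU (sixStates u v a) =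
      ((2 / 3 : ℂ) * (P * ρ).trace) • P - (1 / 3 : ℂ) • (P * ρ * P)
        + (1 - P) * ρ * (1 - P) := by
  subst hP
  set E11 := vecMulVec u (star u) with hE11
  set E12 := vecMulVec u (star v) with hE12
  set E21 := vecMulVec v (star u) with hE21
  set E22 := vecMulVec v (star v) with hE22
  have h0 : reflU (sixStates u v 0) = 1 - (E11 + E12 + E21 + E22) := by
    show reflU (((Real.sqrt 2 : ℂ))⁻¹ • (u + v)) = _
    rw [reflU_sqrt_smul, star_add, vmv_add_left, vmv_add_right, vmv_add_right]
    rw [hE11, hE12, hE21, hE22]; abel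
  have h1 : reflU (sixStates u v 1) = 1 - (E11 - E12 - E21 + E22) := by
    show reflU (((Real.sqrt 2 : ℂ))⁻¹ • (u - v)) = _
    rw [reflU_sqrt_smul, star_sub]
    have : vecMulVec (u - v) (star u - star v)
        = E11 - E12 - E21 + E22 := by
      have hsub : u - v = u + (-1 : ℂ) • v := by rw [sub_eq_add_neg, neg_one_smul]
      have hsub' : star u - star v = star u + (-1 : ℂ) • star v := by rw [sub_eq_add_neg, neg_one_smul]
      rw [hsub, hsub', vmv_add_left, vmv_add_right, vmv_add_right, vmv_smul_left,
        vmv_smul_right, vmv_smul_right, vmv_smul_left, smul_smul]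
      rw [hE11, hE12, hE21, hE22]
      simp only [neg_smul, one_smul, neg_one_mul, neg_neg]
      abel
    rw [this]
  have h2 : reflU (sixStates u v 2)
      = 1 - (E11 + (-Complex.I) • E12 + Complex.I • E21 + E22) := by
    show reflU (((Real.sqrt 2 : ℂ))⁻¹ • (u + Complex.I • v)) = _
    rw [reflU_sqrt_smul, star_add, star_smul, vmv_add_left, vmv_add_right, vmv_add_right,
      vmv_smul_left, vmv_smul_right, vmv_smul_right, vmv_smul_left, smul_smul]
    rw [hE11, hE12, hE21, hE22]
    simp only [Complex.star_def, Complex.conj_I, Complex.I_mul_I, neg_neg, neg_smul, one_smul,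
      smul_eq_mul, neg_mul, mul_neg, neg_one_mul, one_mul]
    abel
  have h3 : reflU (sixStates u v 3)
      = 1 - (E11 + Complex.I • E12 + (-Complex.I) • E21 + E22) := by
    show reflU (((Real.sqrt 2 : ℂ))⁻¹ • (u - Complex.I • v)) = _
    rw [reflU_sqrt_smul]
    have hsub : u - Complex.I • v = u + (-Complex.I) • v := by
      funext i; simp [sub_eq_add_neg]
    rw [hsub, star_add, star_smul, vmv_add_left, vmv_add_right, vmv_add_right,
      vmv_smul_left, vmv_smul_right, vmv_smul_right, vmv_smul_left, smul_smul]
    rw [hE11, hE12, hE21, hE22]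
    simp only [Complex.star_def, map_neg, Complex.conj_I, neg_neg, neg_smul, one_smul,
      neg_mul, mul_neg, Complex.I_mul_I, smul_eq_mul, neg_one_mul, one_mul]
    abel
  have h4 : reflU (sixStates u v 4) = 1 - ((2:ℂ) • E11) := by
    show reflU u = _
    unfold reflU; rw [hE11]
  have h5 : reflU (sixStates u v 5) = 1 - ((2:ℂ) • E22) := by
    show reflU v = _
    unfold reflU; rw [hE22]
  have tr : ((E11 + E22) * ρ).trace = star u ⬝ᵥ ρ *ᵥ u + star v ⬝ᵥ ρ *ᵥ v := by
    rw [add_mul, trace_add, hE11, hE22, trace_vmv_mul, trace_vmv_mul]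
  rw [Fin.sum_univ_six, h0, h1, h2, h3, h4, h5, tr]
  simp only [hE11, hE12, hE21, hE22, sub_mul, mul_sub, add_mul, mul_add, one_mul, mul_one,
    smul_mul_assoc, mul_smul_comm, vmv_mul_vmv_mid]
  match_scalars <;> (ring_nf; try (simp only [Complex.I_sq]; ring_nf))
end

section
/- Let r be a natural number, let ψ₁, ψ₂ : Fin r → ℂ be orthonormal column vectors in ℂ^r (viewed as r×1 matrices), let a be any vector in the ℂ-linear span of {ψ₁, ψ₂}, and let w : Fin r → ℂ satisfy ψ₁ᴴ w = 0 and ψ₂ᴴ w = 0. Then, with U_s = 1 − 2·ψ_s ψ_sᴴ for s ∈ {1,2}: U₁ * (a·wᴴ) * U₁ + U₂ * (a·wᴴ) * U₂ = 0, and likewise U₁ * (w·aᴴ) * U₁ + U₂ * (w·aᴴ) * U₂ = 0. -/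
open Matrix

lemma vmv_mul_vmv {r : ℕ} (u v x y : Fin r → ℂ) :
    Matrix.vecMulVec u v * Matrix.vecMulVec x y = (v ⬝ᵥ x) • Matrix.vecMulVec u y := by
  ext i j
  simp only [Matrix.mul_apply, Matrix.vecMulVec_apply, Matrix.smul_apply, smul_eq_mul,
    dotProduct, Finset.sum_mul]
  apply Finset.sum_congr rfl
  intros; ring

lemma vmv_left_add {r : ℕ} (u u' v : Fin r → ℂ) :
    Matrix.vecMulVec (u + u') v = Matrix.vecMulVec u v + Matrix.vecMulVec u' v := by
  ext i j; simp [Matrix.vecMulVec_apply]; ring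

lemma vmv_left_smul {r : ℕ} (c : ℂ) (u v : Fin r → ℂ) :
    Matrix.vecMulVec (c • u) v = c • Matrix.vecMulVec u v := by
  ext i j; simp [Matrix.vecMulVec_apply]; ring

lemma vmv_right_add {r : ℕ} (u v v' : Fin r → ℂ) :
    Matrix.vecMulVec u (v + v') = Matrix.vecMulVec u v + Matrix.vecMulVec u v' := by
  ext i j; simp [Matrix.vecMulVec_apply]; ring

lemma vmv_right_smul {r : ℕ} (c : ℂ) (u v : Fin r → ℂ) :
    Matrix.vecMulVec u (c • v) = c • Matrix.vecMulVec u v := by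
  ext i j; simp [Matrix.vecMulVec_apply]; ring

lemma refl_conj_right {r : ℕ} (ψ u v : Fin r → ℂ) (hv : v ⬝ᵥ ψ = 0) :
    reflU ψ * Matrix.vecMulVec u v * reflU ψ =
      Matrix.vecMulVec u v - ((2 : ℂ) * (star ψ ⬝ᵥ u)) • Matrix.vecMulVec ψ v := by
  simp only [reflU, sub_mul, mul_sub, one_mul, mul_one, Matrix.smul_mul, Matrix.mul_smul,
    vmv_mul_vmv, hv, zero_smul, smul_zero, mul_zero, sub_zero, smul_smul]

lemma refl_conj_left {r : ℕ} (ψ u v : Fin r → ℂ) (hu : star ψ ⬝ᵥ u = 0) :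
    reflU ψ * Matrix.vecMulVec u v * reflU ψ =
      Matrix.vecMulVec u v - ((2 : ℂ) * (v ⬝ᵥ ψ)) • Matrix.vecMulVec u (star ψ) := by
  simp only [reflU, sub_mul, mul_sub, one_mul, mul_one, Matrix.smul_mul, Matrix.mul_smul,
    vmv_mul_vmv, hu, zero_smul, smul_zero, mul_zero, sub_zero, smul_smul]

/-- Off-block-diagonal vanishing: for an orthonormal pair `ψ₁, ψ₂`,
any `a` in their span and any `w` orthogonal to both, the two reflections annihilate
`a wᴴ` and `w aᴴ` on average. -/
theorem reflections_annihilate_offdiagonal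
    (r : ℕ) (ψ₁ ψ₂ : Fin r → ℂ)
    (h11 : star ψ₁ ⬝ᵥ ψ₁ = 1) (h22 : star ψ₂ ⬝ᵥ ψ₂ = 1) (h12 : star ψ₁ ⬝ᵥ ψ₂ = 0)
    (a : Fin r → ℂ) (ha : a ∈ Submodule.span ℂ {ψ₁, ψ₂})
    (w : Fin r → ℂ) (hw1 : star ψ₁ ⬝ᵥ w = 0) (hw2 : star ψ₂ ⬝ᵥ w = 0) :
    reflU ψ₁ * Matrix.vecMulVec a (star w) * reflU ψ₁ +
        reflU ψ₂ * Matrix.vecMulVec a (star w) * reflU ψ₂ = 0 ∧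
    reflU ψ₁ * Matrix.vecMulVec w (star a) * reflU ψ₁ +
        reflU ψ₂ * Matrix.vecMulVec w (star a) * reflU ψ₂ = 0 := by
  obtain ⟨c₁, c₂, rfl⟩ := Submodule.mem_span_pair.mp ha
  have h21 : star ψ₂ ⬝ᵥ ψ₁ = 0 := by
    have := congrArg (starRingEnd ℂ) h12
    simpa [dotProduct, map_sum, mul_comm] using this
  -- dot products with a
  have d1 : star ψ₁ ⬝ᵥ (c₁ • ψ₁ + c₂ • ψ₂) = c₁ := by
    simp [dotProduct_add, h11, h12]
  have d2 : star ψ₂ ⬝ᵥ (c₁ • ψ₁ + c₂ • ψ₂) = c₂ := by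
    simp [dotProduct_add, h21, h22]
  -- w orthogonality in the other order
  have hw1' : star w ⬝ᵥ ψ₁ = 0 := by
    have := congrArg (starRingEnd ℂ) hw1
    simpa [dotProduct, map_sum, mul_comm] using this
  have hw2' : star w ⬝ᵥ ψ₂ = 0 := by
    have := congrArg (starRingEnd ℂ) hw2
    simpa [dotProduct, map_sum, mul_comm] using this
  have da1 : star (c₁ • ψ₁ + c₂ • ψ₂) ⬝ᵥ ψ₁ = starRingEnd ℂ c₁ := by
    have := congrArg (starRingEnd ℂ) d1
    simpa [dotProduct, map_sum, mul_comm] using this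
  have da2 : star (c₁ • ψ₁ + c₂ • ψ₂) ⬝ᵥ ψ₂ = starRingEnd ℂ c₂ := by
    have := congrArg (starRingEnd ℂ) d2
    simpa [dotProduct, map_sum, mul_comm] using this
  constructor
  · rw [refl_conj_right ψ₁ _ _ hw1', refl_conj_right ψ₂ _ _ hw2', d1, d2,
      vmv_left_add, vmv_left_smul, vmv_left_smul]
    module
  · rw [refl_conj_left ψ₁ _ _ hw1, refl_conj_left ψ₂ _ _ hw2, da1, da2]
    have hsa : star (c₁ • ψ₁ + c₂ • ψ₂) =
        starRingEnd ℂ c₁ • star ψ₁ + starRingEnd ℂ c₂ • star ψ₂ := by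
      funext i; simp [mul_comm]
    rw [hsa, vmv_right_add, vmv_right_smul, vmv_right_smul]
    module
end
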